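/- Let q > 5 and let f : ℝ³ → [0,∞) be measurable with ‖f‖_q := sup_{v∈ℝ³} (1+|v|)^q f(v) < ∞ and ρ_f > 0. Then there exists a constant C_q > 0, depending only on q, such that ρ_f (T_f + |U_f|²)^{(q-3)/2} ≤ C_q ‖f‖_q. -/

import Mathlib

open MeasureTheory Real
open scoped Pointwise

abbrev E3 := EuclideanSpace ℝ (Fin 3)

lemma aux_finrank_E3 : Module.finrank ℝ E3 = 3 := finrank_euclideanSpace_fin

/-- integrability of the Japanese bracket on E3. -/
lemma aux_integrable_bracket {r : ℝ} (hr : 3 < r) :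
    Integrable (fun v : E3 => (1 + ‖v‖) ^ (-r)) := by
  apply integrable_one_add_norm
  rw [aux_finrank_E3]
  exact_mod_cast hr

lemma aux_meas_set (R : ℝ) : MeasurableSet {v : E3 | R < ‖v‖} :=
  measurableSet_lt measurable_const measurable_norm

/-- scaling identity for the tail integral. -/
lemma aux_tail_scaling (q R : ℝ) (hR : 0 < R) :
    ∫ v in {v : E3 | R < ‖v‖}, ‖v‖ ^ (2 - q) =
      R ^ (5 - q) * ∫ v in {v : E3 | 1 < ‖v‖}, ‖v‖ ^ (2 - q) := by
  have h := MeasureTheory.Measure.setIntegral_comp_smul_of_pos (volume : Measure E3)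
    (fun v => ‖v‖ ^ (2 - q)) {v : E3 | 1 < ‖v‖} hR
  have hset : R • {v : E3 | 1 < ‖v‖} = {v : E3 | R < ‖v‖} := by
    ext x
    rw [Set.mem_smul_set_iff_inv_smul_mem₀ hR.ne']
    simp only [Set.mem_setOf_eq, norm_smul, norm_inv, Real.norm_eq_abs, abs_of_pos hR]
    rw [inv_mul_eq_div, lt_div_iff₀ hR, one_mul]
  rw [hset, aux_finrank_E3, smul_eq_mul] at h
  have hL : ∀ x : E3, ‖R • x‖ ^ (2 - q) = R ^ (2 - q) * ‖x‖ ^ (2 - q) := by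
    intro x
    rw [norm_smul, Real.norm_eq_abs, abs_of_pos hR, Real.mul_rpow hR.le (norm_nonneg x)]
  simp only [hL] at h
  rw [integral_const_mul] at h
  have h3 : (0:ℝ) < R ^ (3:ℕ) := pow_pos hR 3
  have key : ∫ v in {v : E3 | R < ‖v‖}, ‖v‖ ^ (2 - q) =
      R ^ (3:ℕ) * (R ^ (2 - q) * ∫ v in {v : E3 | 1 < ‖v‖}, ‖v‖ ^ (2 - q)) := by
    field_simp at h
    linarith
  rw [key, show (5:ℝ) - q = (3:ℕ) + (2 - q) by push_cast; ring,
    Real.rpow_add hR, Real.rpow_natCast]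
  ring

/-- integrability of `‖v‖^(2-q)` outside the unit ball. -/
lemma aux_integrableOn_tail {q : ℝ} (hq : 5 < q) :
    IntegrableOn (fun v : E3 => ‖v‖ ^ (2 - q)) {v : E3 | 1 < ‖v‖} := by
  have hbr : Integrable (fun v : E3 => (2:ℝ) ^ (q-2) * (1 + ‖v‖) ^ (-(q - 2))) :=
    (aux_integrable_bracket (by linarith)).const_mul _
  apply Integrable.mono' (hbr.restrict (s := {v : E3 | 1 < ‖v‖}))
  · apply Measurable.aestronglyMeasurable
    fun_prop
  · rw [ae_restrict_iff' (aux_meas_set 1)]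
    refine Filter.Eventually.of_forall fun v hv => ?_
    have hv1 : (1:ℝ) < ‖v‖ := hv
    have hv0 : (0:ℝ) < ‖v‖ := by linarith
    have h1v : (0:ℝ) < 1 + ‖v‖ := by linarith
    rw [Real.norm_eq_abs, abs_of_nonneg (Real.rpow_nonneg (norm_nonneg v) _)]
    have hle : (1:ℝ) + ‖v‖ ≤ 2 * ‖v‖ := by linarith
    have h2 : ((2:ℝ) * ‖v‖) ^ (2 - q) ≤ (1 + ‖v‖) ^ (2 - q) :=
      Real.rpow_le_rpow_of_nonpos h1v hle (by linarith)
    rw [Real.mul_rpow (by norm_num) (norm_nonneg v)] at h2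
    have h2pos : (0:ℝ) < (2:ℝ) ^ (q-2) := Real.rpow_pos_of_pos (by norm_num) _
    have h22 : (2:ℝ) ^ (q-2) * (2:ℝ) ^ (2-q) = 1 := by
      rw [← Real.rpow_add (by norm_num)]; norm_num
    calc ‖v‖ ^ (2 - q) = (2:ℝ) ^ (q-2) * ((2:ℝ) ^ (2-q) * ‖v‖ ^ (2 - q)) := by
          rw [← mul_assoc, h22, one_mul]
      _ ≤ (2:ℝ) ^ (q-2) * (1 + ‖v‖) ^ (2 - q) := by
          exact mul_le_mul_of_nonneg_left h2 h2pos.le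
      _ = (2:ℝ) ^ (q-2) * (1 + ‖v‖) ^ (-(q - 2)) := by rw [neg_sub]

set_option maxHeartbeats 2000000 in
theorem lem_temp_ii (q : ℝ) (hq : 5 < q) :
    ∃ C : ℝ, 0 < C ∧
      ∀ (f : E3 → ℝ), Measurable f → (∀ v, 0 ≤ f v) →
        Integrable f →
        ∀ N : ℝ, (∀ v, (1 + ‖v‖) ^ q * f v ≤ N) →
        ∀ (ρf : ℝ) (Uf : E3) (Tf : ℝ),
          ρf = ∫ v, f v →
          Integrable (fun v => f v • v) →
          Uf = ρf⁻¹ • ∫ v, f v • v →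
          Integrable (fun v => ‖v - Uf‖ ^ 2 * f v) →
          Tf = (3 * ρf)⁻¹ * ∫ v, ‖v - Uf‖ ^ 2 * f v →
          0 < ρf →
          ρf * (Tf + ‖Uf‖ ^ 2) ^ ((q - 3) / 2) ≤ C * N := by
  set c0 : ℝ := ∫ v : E3, (1 + ‖v‖) ^ (-q) with hc0def
  set J : ℝ := ∫ v in {v : E3 | 1 < ‖v‖}, ‖v‖ ^ (2 - q) with hJdef
  have hc0 : 0 ≤ c0 := integral_nonneg fun v => Real.rpow_nonneg (by positivity) _
  have hJ0 : 0 ≤ J := setIntegral_nonneg (aux_meas_set 1)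
    fun v _ => Real.rpow_nonneg (norm_nonneg v) _
  have hPq : (0:ℝ) < 2 ^ ((q - 3) / 2) := Real.rpow_pos_of_pos (by norm_num) _
  refine ⟨2 ^ ((q - 3) / 2) * (c0 + J) + 1, by positivity, ?_⟩
  intro f hfm hf0 hfi N hN ρf Uf Tf hρ hintv hU hint2 hT hρpos
  have hN0 : 0 ≤ N := le_trans (mul_nonneg (Real.rpow_nonneg (by positivity) _) (hf0 0)) (hN 0)
  -- pointwise bounds
  have hfb : ∀ v : E3, f v ≤ N * (1 + ‖v‖) ^ (-q) := by
    intro v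
    have hb : (0:ℝ) < (1 + ‖v‖) ^ q := Real.rpow_pos_of_pos (by positivity) _
    rw [Real.rpow_neg (by positivity), mul_comm N, ← div_eq_inv_mul, le_div_iff₀ hb, mul_comm]
    exact hN v
  have hdom2 : ∀ v : E3, ‖v‖ ^ 2 * f v ≤ N * (1 + ‖v‖) ^ (-(q - 2)) := by
    intro v
    have h1v : (0:ℝ) < 1 + ‖v‖ := by positivity
    have e1 : ‖v‖ ^ 2 * f v ≤ (1 + ‖v‖) ^ (2:ℕ) * f v := by
      apply mul_le_mul_of_nonneg_right _ (hf0 v)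
      exact pow_le_pow_left₀ (norm_nonneg v) (by linarith [norm_nonneg v]) 2
    have e2 : ((1:ℝ) + ‖v‖) ^ (2:ℕ) = (1 + ‖v‖) ^ (-(q-2)) * (1 + ‖v‖) ^ q := by
      rw [← Real.rpow_natCast (1 + ‖v‖) 2, ← Real.rpow_add h1v]
      norm_num
    calc ‖v‖ ^ 2 * f v ≤ (1 + ‖v‖) ^ (2:ℕ) * f v := e1
      _ = (1 + ‖v‖) ^ (-(q-2)) * ((1 + ‖v‖) ^ q * f v) := by rw [e2, mul_assoc]
      _ ≤ (1 + ‖v‖) ^ (-(q-2)) * N :=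
          mul_le_mul_of_nonneg_left (hN v) (Real.rpow_nonneg h1v.le _)
      _ = N * (1 + ‖v‖) ^ (-(q - 2)) := mul_comm _ _
  -- second moment is integrable
  have hm2i : Integrable (fun v : E3 => ‖v‖ ^ 2 * f v) := by
    apply Integrable.mono' ((aux_integrable_bracket (show (3:ℝ) < q - 2 by linarith)).const_mul N)
    · exact ((measurable_norm.pow_const 2).mul hfm).aestronglyMeasurable
    · refine Filter.Eventually.of_forall fun v => ?_
      rw [Real.norm_eq_abs, abs_of_nonneg (mul_nonneg (by positivity) (hf0 v))]
      exact hdom2 v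
  set m2 : ℝ := ∫ v : E3, ‖v‖ ^ 2 * f v with hm2def
  -- first moment identity
  have hI : ∫ v : E3, f v • v = ρf • Uf := by
    rw [hU, smul_smul, mul_inv_cancel₀ hρpos.ne', one_smul]
  have hinner_val : ∫ v : E3, (inner ℝ Uf (f v • v) : ℝ) = ρf * ‖Uf‖ ^ 2 := by
    rw [integral_inner hintv Uf, hI, real_inner_smul_right, real_inner_self_eq_norm_sq]
  have hinner_int : Integrable (fun v : E3 => (inner ℝ Uf (f v • v) : ℝ)) :=
    hintv.const_inner Uf
  have hptw : ∀ v : E3, ‖v - Uf‖ ^ 2 * f v =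
      ‖v‖ ^ 2 * f v - 2 * (inner ℝ Uf (f v • v) : ℝ) + ‖Uf‖ ^ 2 * f v := by
    intro v
    rw [norm_sub_sq_real, real_inner_smul_right, real_inner_comm]
    ring
  have key : ∫ v : E3, ‖v - Uf‖ ^ 2 * f v = m2 - ρf * ‖Uf‖ ^ 2 := by
    calc ∫ v : E3, ‖v - Uf‖ ^ 2 * f v
        = ∫ v : E3, (‖v‖ ^ 2 * f v - 2 * (inner ℝ Uf (f v • v) : ℝ) + ‖Uf‖ ^ 2 * f v) := by
          exact integral_congr_ae (Filter.Eventually.of_forall hptw)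
      _ = (∫ v : E3, (‖v‖ ^ 2 * f v - 2 * (inner ℝ Uf (f v • v) : ℝ)))
            + ∫ v : E3, ‖Uf‖ ^ 2 * f v := by
          exact integral_add (hm2i.sub (hinner_int.const_mul 2)) (hfi.const_mul _)
      _ = m2 - ρf * ‖Uf‖ ^ 2 := by
          rw [integral_sub hm2i (hinner_int.const_mul 2), integral_const_mul, integral_const_mul,
            hinner_val, ← hρ]
          try rw [← hm2def]
          ring
  have hint2pos : (0:ℝ) ≤ ∫ v : E3, ‖v - Uf‖ ^ 2 * f v :=
    integral_nonneg fun v => mul_nonneg (by positivity) (hf0 v)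
  have hT0 : 0 ≤ Tf := by
    rw [hT]
    exact mul_nonneg (inv_nonneg.2 (by linarith)) hint2pos
  have hUm : ρf * ‖Uf‖ ^ 2 ≤ m2 := by rw [key] at hint2pos; linarith
  have hTval : 3 * ρf * Tf = m2 - ρf * ‖Uf‖ ^ 2 := by
    rw [hT, key]
    field_simp
  have hρB : ρf * (Tf + ‖Uf‖ ^ 2) ≤ m2 := by nlinarith
  -- density bound
  have hρc : ρf ≤ N * c0 := by
    rw [hρ, hc0def, ← integral_const_mul]
    exact integral_mono hfi ((aux_integrable_bracket (by linarith)).const_mul N) hfb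
  -- tail estimate
  have htail : ∀ R : ℝ, 1 ≤ R → m2 ≤ ρf * R ^ 2 + N * J * R ^ (5 - q) := by
    intro R hR1
    have hR0 : (0:ℝ) < R := by linarith
    have hs := aux_meas_set R
    have hsub : {v : E3 | R < ‖v‖} ⊆ {v : E3 | 1 < ‖v‖} := fun v hv => by
      simp only [Set.mem_setOf_eq] at *; linarith
    have hsplit : m2 = (∫ v in {v : E3 | R < ‖v‖}, ‖v‖ ^ 2 * f v)
        + ∫ v in {v : E3 | R < ‖v‖}ᶜ, ‖v‖ ^ 2 * f v := (integral_add_compl hs hm2i).symm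
    have hhead : ∫ v in {v : E3 | R < ‖v‖}ᶜ, ‖v‖ ^ 2 * f v ≤ ρf * R ^ 2 := by
      have h1 : ∫ v in {v : E3 | R < ‖v‖}ᶜ, ‖v‖ ^ 2 * f v
          ≤ ∫ v in {v : E3 | R < ‖v‖}ᶜ, R ^ 2 * f v := by
        apply setIntegral_mono_on hm2i.integrableOn ((hfi.const_mul _).integrableOn) hs.compl
        intro v hv
        simp only [Set.mem_compl_iff, Set.mem_setOf_eq, not_lt] at hv
        exact mul_le_mul_of_nonneg_right (by nlinarith [norm_nonneg v]) (hf0 v)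
      have h2 : ∫ v in {v : E3 | R < ‖v‖}ᶜ, R ^ 2 * f v ≤ R ^ 2 * ρf := by
        rw [integral_const_mul, hρ]
        exact mul_le_mul_of_nonneg_left
          (setIntegral_le_integral hfi (Filter.Eventually.of_forall hf0)) (by positivity)
      linarith
    have htl : ∫ v in {v : E3 | R < ‖v‖}, ‖v‖ ^ 2 * f v ≤ N * J * R ^ (5 - q) := by
      have h1 : ∫ v in {v : E3 | R < ‖v‖}, ‖v‖ ^ 2 * f v
          ≤ ∫ v in {v : E3 | R < ‖v‖}, N * ‖v‖ ^ (2 - q) := by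
        apply setIntegral_mono_on hm2i.integrableOn
          (((aux_integrableOn_tail hq).mono_set hsub).const_mul N) hs
        intro v hv
        have hv1 : R < ‖v‖ := hv
        have hv0 : (0:ℝ) < ‖v‖ := by linarith
        have e1 : f v ≤ N * (1 + ‖v‖) ^ (-q) := hfb v
        have e2 : (1 + ‖v‖) ^ (-q) ≤ ‖v‖ ^ (-q) :=
          Real.rpow_le_rpow_of_nonpos hv0 (by linarith) (by linarith)
        have e3 : ‖v‖ ^ 2 * ‖v‖ ^ (-q) = ‖v‖ ^ (2 - q) := by
          rw [← Real.rpow_natCast ‖v‖ 2, ← Real.rpow_add hv0]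
          norm_num [sub_eq_add_neg]
        calc ‖v‖ ^ 2 * f v ≤ ‖v‖ ^ 2 * (N * (1 + ‖v‖) ^ (-q)) :=
              mul_le_mul_of_nonneg_left e1 (by positivity)
          _ ≤ ‖v‖ ^ 2 * (N * ‖v‖ ^ (-q)) := by
              apply mul_le_mul_of_nonneg_left _ (by positivity)
              exact mul_le_mul_of_nonneg_left e2 hN0
          _ = N * ‖v‖ ^ (2 - q) := by rw [← e3]; ring
      have h2 : ∫ v in {v : E3 | R < ‖v‖}, N * ‖v‖ ^ (2 - q) = N * J * R ^ (5 - q) := by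
        rw [integral_const_mul, aux_tail_scaling q R hR0, ← hJdef]
        ring
      linarith [h1, h2.le]
    linarith
  -- conclusion
  set B : ℝ := Tf + ‖Uf‖ ^ 2 with hBdef
  have hB0 : 0 ≤ B := by positivity
  rcases le_or_gt B 2 with hB | hB
  · have hbp : B ^ ((q - 3) / 2) ≤ 2 ^ ((q - 3) / 2) :=
      Real.rpow_le_rpow hB0 hB (by linarith)
    have hbp0 : 0 ≤ B ^ ((q - 3) / 2) := Real.rpow_nonneg hB0 _
    nlinarith [mul_le_mul_of_nonneg_left hbp hρpos.le,
      mul_le_mul_of_nonneg_right hρc hPq.le,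
      mul_nonneg (mul_nonneg hPq.le hJ0) hN0]
  · have hBpos : (0:ℝ) < B := by linarith
    obtain ⟨R, hR0, hR2⟩ : ∃ R : ℝ, 0 ≤ R ∧ R ^ 2 = B / 2 :=
      ⟨Real.sqrt (B / 2), Real.sqrt_nonneg _, Real.sq_sqrt (by linarith)⟩
    have hR1 : 1 ≤ R := by nlinarith
    have hRpos : (0:ℝ) < R := by linarith
    have ht := htail R hR1
    have h1 : ρf * B ≤ 2 * (N * J * R ^ (5 - q)) := by
      have := hρB
      rw [hR2] at ht
      nlinarith
    have hRR : R ^ (5 - q) * R ^ (q - 5) = 1 := by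
      rw [← Real.rpow_add hRpos]; norm_num
    have hBsplit : B ^ ((q - 3) / 2) = B * (2 ^ ((q - 5) / 2) * R ^ (q - 5)) := by
      have e1 : B ^ ((q - 3) / 2) = B ^ (1 + (q - 5) / 2) := by congr 1; ring
      have e2 : B = 2 * R ^ 2 := by rw [hR2]; ring
      rw [e1, Real.rpow_add hBpos, Real.rpow_one]
      congr 1
      rw [e2, Real.mul_rpow (by norm_num) (by positivity),
        ← Real.rpow_natCast R 2, ← Real.rpow_mul hR0]
      congr 1
      push_cast
      ring
    have hfinal : ρf * B ^ ((q - 3) / 2) ≤ 2 ^ ((q - 3) / 2) * (N * J) := by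
      have hnn : (0:ℝ) ≤ 2 ^ ((q - 5) / 2) * R ^ (q - 5) := by positivity
      calc ρf * B ^ ((q - 3) / 2) = (ρf * B) * (2 ^ ((q - 5) / 2) * R ^ (q - 5)) := by
            rw [hBsplit]; ring
        _ ≤ (2 * (N * J * R ^ (5 - q))) * (2 ^ ((q - 5) / 2) * R ^ (q - 5)) :=
            mul_le_mul_of_nonneg_right h1 hnn
        _ = (2 * 2 ^ ((q - 5) / 2)) * (N * J) * (R ^ (5 - q) * R ^ (q - 5)) := by ring
        _ = 2 ^ ((q - 3) / 2) * (N * J) := by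
            rw [hRR, mul_one]
            congr 1
            rw [show (2:ℝ) * 2 ^ ((q - 5) / 2) = 2 ^ (1:ℝ) * 2 ^ ((q - 5) / 2) by
              rw [Real.rpow_one], ← Real.rpow_add (by norm_num)]
            norm_num
            ring_nf
    nlinarith [mul_nonneg (mul_nonneg hPq.le hc0) hN0]
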